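/- Let (A, ρ) be a commutative seminormed *-algebra whose Gelfand spectrum Sp_ρ(A) is not compact, and A₁ its unitization with seminorm ρ₁(a,λ) = ρ(a) + |λ|. Then Sp_{ρ₁}(A₁) is homeomorphic to the one-point compactification of Sp_ρ(A). -/

import Mathlib

open Unitization Filter Metric Set Topology
open scoped Classical

set_option linter.unusedSectionVars false

namespace Stmt7Aux

variable {𝕜 A : Type*} [RCLike 𝕜] [NonUnitalCommRing A] [StarRing A] [Module 𝕜 A]
    [IsScalarTower 𝕜 A A] [SMulCommClass 𝕜 A A] [StarModule 𝕜 A]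

def Sp (ρ : A → ℝ) : Set (A → 𝕜) :=
  {φ | φ ≠ 0 ∧ (∃ α : A →⋆ₙₐ[𝕜] 𝕜, ⇑α = φ) ∧ ∀ a, ‖φ a‖ ≤ ρ a}

def Sp1 (ρ : A → ℝ) : Set (Unitization 𝕜 A → 𝕜) :=
  {φ | (∃ α : Unitization 𝕜 A →⋆ₐ[𝕜] 𝕜, ⇑α = φ) ∧
    ∀ x : Unitization 𝕜 A, ‖φ x‖ ≤ ρ x.snd + ‖x.fst‖}

variable (ρ : A → ℝ)

lemma G_mem (φ : A → 𝕜) (hφ : ∃ α : A →⋆ₙₐ[𝕜] 𝕜, ⇑α = φ) (hb : ∀ a, ‖φ a‖ ≤ ρ a) :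
    (fun x : Unitization 𝕜 A => φ x.snd + x.fst) ∈ Sp1 (𝕜 := 𝕜) ρ := by
  obtain ⟨α, rfl⟩ := hφ
  refine ⟨⟨Unitization.starLift α, ?_⟩, fun x => ?_⟩
  · ext x
    simp [Unitization.starLift_apply, NonUnitalStarAlgHom.coe_toNonUnitalAlgHom, add_comm]
    rfl
  · exact (norm_add_le _ _).trans (by gcongr; exact hb _)

lemma key (ψ : Unitization 𝕜 A → 𝕜) (hψ : ∃ α : Unitization 𝕜 A →⋆ₐ[𝕜] 𝕜, ⇑α = ψ)
    (x : Unitization 𝕜 A) : ψ x = ψ ((x.snd : A) : Unitization 𝕜 A) + x.fst := by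
  obtain ⟨α, rfl⟩ := hψ
  conv_lhs => rw [← Unitization.inl_fst_add_inr_snd_eq x]
  rw [map_add]
  have h1 : α (Unitization.inl x.fst) = x.fst := by
    have := α.commutes x.fst
    simpa [Unitization.algebraMap_eq_inl] using this
  rw [h1, add_comm]

lemma restrict_mem (ψ : Unitization 𝕜 A → 𝕜) (hψ : ψ ∈ Sp1 (𝕜 := 𝕜) ρ)
    (h : (fun a : A => ψ ((a : Unitization 𝕜 A))) ≠ 0) :
    (fun a : A => ψ ((a : Unitization 𝕜 A))) ∈ Sp (𝕜 := 𝕜) ρ := by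
  obtain ⟨⟨α, rfl⟩, hb⟩ := hψ
  refine ⟨h, ⟨(α : Unitization 𝕜 A →⋆ₙₐ[𝕜] 𝕜).comp (Unitization.inrNonUnitalStarAlgHom 𝕜 A),
    rfl⟩, fun a => ?_⟩
  have := hb ((a : Unitization 𝕜 A))
  simpa using this

/-- The extension-by-zero map. -/
noncomputable def P (p : OnePoint ↥(Sp (𝕜 := 𝕜) ρ)) : A → 𝕜 :=
  Option.elim p 0 Subtype.val

@[simp] lemma P_infty : P ρ (OnePoint.infty : OnePoint ↥(Sp (𝕜 := 𝕜) ρ)) = 0 := rfl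

@[simp] lemma P_coe (α : ↥(Sp (𝕜 := 𝕜) ρ)) : P ρ (α : OnePoint ↥(Sp (𝕜 := 𝕜) ρ)) = α.1 := rfl

noncomputable def toK (hnonneg : ∀ a, 0 ≤ ρ a) (p : OnePoint ↥(Sp (𝕜 := 𝕜) ρ)) :
    ↥(Sp1 (𝕜 := 𝕜) ρ) :=
  ⟨fun x => P ρ p x.snd + x.fst, by
    induction p using OnePoint.rec with
    | infty => exact G_mem ρ 0 ⟨0, rfl⟩ (fun a => by simpa using hnonneg a)
    | coe α => exact G_mem ρ α.1 α.2.2.1 α.2.2.2⟩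

@[simp] lemma toK_apply (hnonneg : ∀ a, 0 ≤ ρ a) (p : OnePoint ↥(Sp (𝕜 := 𝕜) ρ))
    (x : Unitization 𝕜 A) : (toK ρ hnonneg p).1 x = P ρ p x.snd + x.fst := rfl

noncomputable def theEquiv (hnonneg : ∀ a, 0 ≤ ρ a) :
    OnePoint ↥(Sp (𝕜 := 𝕜) ρ) ≃ ↥(Sp1 (𝕜 := 𝕜) ρ) where
  toFun := toK ρ hnonneg
  invFun ψ :=
    if h : (fun a : A => ψ.1 ((a : Unitization 𝕜 A))) = 0 then (OnePoint.infty : OnePoint ↥(Sp (𝕜 := 𝕜) ρ))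
    else ((⟨_, restrict_mem ρ ψ.1 ψ.2 h⟩ : ↥(Sp (𝕜 := 𝕜) ρ)) : OnePoint ↥(Sp (𝕜 := 𝕜) ρ))
  left_inv p := by
    induction p using OnePoint.rec with
    | infty =>
      beta_reduce
      rw [dif_pos]
      funext a
      simp
    | coe α =>
      have hne : (fun a : A => (toK ρ hnonneg α).1 ((a : Unitization 𝕜 A))) = α.1 := by
        funext a; simp
      beta_reduce
      rw [dif_neg (by rw [hne]; exact α.2.1)]
      congr 1
      exact Subtype.ext hne
  right_inv ψ := by
    by_cases h : (fun a : A => ψ.1 ((a : Unitization 𝕜 A))) = 0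
    · beta_reduce
      rw [dif_pos h]
      apply Subtype.ext
      funext x
      have hx := key ψ.1 ψ.2.1 x
      have h0 : ψ.1 ((x.snd : A) : Unitization 𝕜 A) = 0 := congrFun h x.snd
      rw [toK_apply, hx, h0, P_infty]
      rfl
    · beta_reduce
      rw [dif_neg h]
      apply Subtype.ext
      funext x
      have hx := key ψ.1 ψ.2.1 x
      rw [toK_apply, P_coe, hx]

lemma isClosed_B (a : A) (ε : ℝ) :
    IsClosed {α : ↥(Sp (𝕜 := 𝕜) ρ) | ε ≤ ‖α.1 a‖} := by
  have : Continuous fun α : ↥(Sp (𝕜 := 𝕜) ρ) => ‖α.1 a‖ :=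
    ((continuous_apply a).comp continuous_subtype_val).norm
  exact isClosed_le continuous_const this

lemma isCompact_B (a : A) {ε : ℝ} (hε : 0 < ε) :
    IsCompact {α : ↥(Sp (𝕜 := 𝕜) ρ) | ε ≤ ‖α.1 a‖} := by
  set T : Set (A → 𝕜) :=
    {φ | (∀ x y, φ (x + y) = φ x + φ y) ∧ (∀ (r : 𝕜) x, φ (r • x) = r * φ x) ∧
      (∀ x y, φ (x * y) = φ x * φ y) ∧ (∀ x, φ (star x) = star (φ x)) ∧
      (∀ b, ‖φ b‖ ≤ ρ b) ∧ ε ≤ ‖φ a‖} with hT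
  have c1 : IsClosed {φ : A → 𝕜 | ∀ x y, φ (x + y) = φ x + φ y} := by
    simp only [Set.setOf_forall]
    exact isClosed_iInter fun x => isClosed_iInter fun y =>
      isClosed_eq (continuous_apply _) ((continuous_apply x).add (continuous_apply y))
  have c2 : IsClosed {φ : A → 𝕜 | ∀ (r : 𝕜) x, φ (r • x) = r * φ x} := by
    simp only [Set.setOf_forall]
    exact isClosed_iInter fun r => isClosed_iInter fun x =>
      isClosed_eq (continuous_apply _) (continuous_const.mul (continuous_apply _))
  have c3 : IsClosed {φ : A → 𝕜 | ∀ x y, φ (x * y) = φ x * φ y} := by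
    simp only [Set.setOf_forall]
    exact isClosed_iInter fun x => isClosed_iInter fun y =>
      isClosed_eq (continuous_apply _) ((continuous_apply x).mul (continuous_apply y))
  have c4 : IsClosed {φ : A → 𝕜 | ∀ x, φ (star x) = star (φ x)} := by
    simp only [Set.setOf_forall]
    exact isClosed_iInter fun x =>
      isClosed_eq (continuous_apply _) (continuous_star.comp (continuous_apply _))
  have c5 : IsClosed {φ : A → 𝕜 | ∀ b, ‖φ b‖ ≤ ρ b} := by
    simp only [Set.setOf_forall]
    exact isClosed_iInter fun b => isClosed_le (continuous_apply b).norm continuous_const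
  have c6 : IsClosed {φ : A → 𝕜 | ε ≤ ‖φ a‖} :=
    isClosed_le continuous_const (continuous_apply a).norm
  have hTclosed : IsClosed T := by
    rw [hT]
    simp only [Set.setOf_and]
    exact c1.inter (c2.inter (c3.inter (c4.inter (c5.inter c6))))
  have hTsub : T ⊆ Set.pi Set.univ (fun b => Metric.closedBall (0 : 𝕜) (ρ b)) := by
    intro φ hφ
    rw [Set.mem_univ_pi]
    intro b
    simpa [Metric.mem_closedBall, dist_zero_right] using hφ.2.2.2.2.1 b
  have hTcompact : IsCompact T :=
    IsCompact.of_isClosed_subset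
      (isCompact_univ_pi fun b => isCompact_closedBall (0 : 𝕜) (ρ b)) hTclosed hTsub
  have himage : Subtype.val '' {α : ↥(Sp (𝕜 := 𝕜) ρ) | ε ≤ ‖α.1 a‖} = T := by
    ext φ
    constructor
    · rintro ⟨⟨φ, ⟨hne, ⟨β, rfl⟩, hb⟩⟩, hεφ, rfl⟩
      exact ⟨fun x y => map_add β x y, fun r x => by simpa using map_smul β r x,
        fun x y => map_mul β x y, fun x => map_star β x, hb, hεφ⟩
    · rintro ⟨h1, h2, h3, h4, h5, h6⟩
      have hφ0 : φ 0 = 0 := by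
        have := h1 0 0
        rw [add_zero] at this
        exact (left_eq_add.mp this)
      have hne : φ ≠ 0 := by
        intro h0
        rw [h0] at h6
        simp at h6
        linarith
      let β : A →⋆ₙₐ[𝕜] 𝕜 :=
        { toFun := φ
          map_smul' := fun r x => by simpa [smul_eq_mul] using h2 r x
          map_zero' := hφ0
          map_add' := h1
          map_mul' := h3
          map_star' := h4 }
      exact ⟨⟨φ, hne, ⟨β, rfl⟩, h5⟩, h6, rfl⟩
  rw [IsEmbedding.subtypeVal.isCompact_iff, himage]
  exact hTcompact

lemma continuous_toK (hnonneg : ∀ a, 0 ≤ ρ a) : Continuous ⇑(theEquiv (𝕜 := 𝕜) ρ hnonneg) := by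
  show Continuous (toK (𝕜 := 𝕜) ρ hnonneg)
  rw [continuous_induced_rng]
  refine continuous_pi fun x => ?_
  show Continuous fun p : OnePoint ↥(Sp (𝕜 := 𝕜) ρ) => P ρ p x.snd + x.fst
  refine Continuous.add ?_ continuous_const
  rw [OnePoint.continuous_iff]
  constructor
  · show Tendsto (fun α : ↥(Sp (𝕜 := 𝕜) ρ) => α.1 x.snd) (coclosedCompact _) (𝓝 0)
    rw [Metric.tendsto_nhds]
    intro ε hε
    rw [Filter.hasBasis_coclosedCompact.eventually_iff]
    refine ⟨{α : ↥(Sp (𝕜 := 𝕜) ρ) | ε ≤ ‖α.1 x.snd‖},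
      ⟨isClosed_B ρ x.snd ε, isCompact_B ρ x.snd hε⟩, fun α hα => ?_⟩
    rw [Set.mem_compl_iff, Set.mem_setOf_eq, not_le] at hα
    simpa [dist_zero_right] using hα
  · exact (continuous_apply x.snd).comp continuous_subtype_val

end Stmt7Aux

/-- for a commutative seminormed `*`-algebra `(A, ρ)` over `𝕜 = ℝ` or `ℂ` whose
Gelfand spectrum `Sp_ρ(A)` (nonzero `ρ`-continuous `*`-homomorphisms, topology of pointwise
convergence) is not compact, the spectrum of the unitization `A₁` with `ρ₁(a, λ) = ρ a + ‖λ‖` is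
homeomorphic to the one-point compactification of `Sp_ρ(A)`. -/
theorem stmt7 {𝕜 A : Type*} [RCLike 𝕜] [NonUnitalCommRing A] [StarRing A] [Module 𝕜 A]
    [IsScalarTower 𝕜 A A] [SMulCommClass 𝕜 A A] [StarModule 𝕜 A]
    (ρ : A → ℝ)
    (hnonneg : ∀ a, 0 ≤ ρ a)
    (hstar : ∀ a, ρ (star a) = ρ a)
    (hadd : ∀ a b, ρ (a + b) ≤ ρ a + ρ b)
    (hsmul : ∀ (r : 𝕜) (a : A), ρ (r • a) = ‖r‖ * ρ a)
    (hmul : ∀ a b, ρ (a * b) ≤ ρ a * ρ b)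
    (hnc : ¬ IsCompact
      {φ : A → 𝕜 | φ ≠ 0 ∧ (∃ α : A →⋆ₙₐ[𝕜] 𝕜, ⇑α = φ) ∧ ∀ a, ‖φ a‖ ≤ ρ a}) :
    Nonempty
      (↥{φ : Unitization 𝕜 A → 𝕜 | (∃ α : Unitization 𝕜 A →⋆ₐ[𝕜] 𝕜, ⇑α = φ) ∧
          ∀ x : Unitization 𝕜 A, ‖φ x‖ ≤ ρ x.snd + ‖x.fst‖} ≃ₜ
        OnePoint ↥{φ : A → 𝕜 | φ ≠ 0 ∧ (∃ α : A →⋆ₙₐ[𝕜] 𝕜, ⇑α = φ) ∧ ∀ a, ‖φ a‖ ≤ ρ a}) := by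
  show Nonempty (↥(Stmt7Aux.Sp1 (𝕜 := 𝕜) ρ) ≃ₜ OnePoint ↥(Stmt7Aux.Sp (𝕜 := 𝕜) ρ))
  exact ⟨(Continuous.homeoOfEquivCompactToT2
    (f := Stmt7Aux.theEquiv ρ hnonneg) (Stmt7Aux.continuous_toK ρ hnonneg)).symm⟩
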